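/- Let S₀, S₁ be i.i.d. {0,1}-valued random variables and let (X₁,X₂) be {0,1}²-valued random variables independent of (S₀,S₁) (with arbitrary joint law of X₁ and X₂). Define T = S₀ if X₁ = X₂ and T = S₁ if X₁ ≠ X₂. Then H(T | X₁,X₂) = H(S₀) and H(S₀,S₁ | X₁,X₂,T) = H(S₀). -/

import Mathlib

open scoped BigOperators
open Classical

noncomputable section

/-- Probability that the random variable `X` equals `x` under the pmf `p`. -/
def pr {Ω α : Type*} [Fintype Ω] (p : Ω → ℝ) (X : Ω → α) (x : α) : ℝ :=
  ∑ ω : Ω, if X ω = x then p ω else 0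

/-- Shannon entropy (in bits), with the convention `0 · log₂ 0 = 0`. -/
def ent {Ω α : Type*} [Fintype Ω] (p : Ω → ℝ) (X : Ω → α) : ℝ :=
  -∑ x ∈ Finset.univ.image X, pr p X x * Real.logb 2 (pr p X x)

/-- Conditional entropy `H(X|Y) = H(X,Y) - H(Y)`. -/
def condEnt {Ω α β : Type*} [Fintype Ω] (p : Ω → ℝ) (X : Ω → α) (Y : Ω → β) : ℝ :=
  ent p (fun ω => (X ω, Y ω)) - ent p Y

/-- Mutual information `I(X;Y) = H(X) + H(Y) - H(X,Y)`. -/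
def mi {Ω α β : Type*} [Fintype Ω] (p : Ω → ℝ) (X : Ω → α) (Y : Ω → β) : ℝ :=
  ent p X + ent p Y - ent p (fun ω => (X ω, Y ω))

/-- Conditional mutual information `I(X;Y|Z) = H(X,Z) + H(Y,Z) - H(X,Y,Z) - H(Z)`. -/
def cmi {Ω α β γ : Type*} [Fintype Ω] (p : Ω → ℝ) (X : Ω → α) (Y : Ω → β) (Z : Ω → γ) : ℝ :=
  ent p (fun ω => (X ω, Z ω)) + ent p (fun ω => (Y ω, Z ω))
    - ent p (fun ω => (X ω, Y ω, Z ω)) - ent p Z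

/-- `p` is a probability mass function on the finite sample space `Ω`. -/
def IsPMF {Ω : Type*} [Fintype Ω] (p : Ω → ℝ) : Prop :=
  (∀ ω, 0 ≤ p ω) ∧ ∑ ω : Ω, p ω = 1

/-- The random variables `X` and `Y` are independent under `p`. -/
def IndepRV {Ω α β : Type*} [Fintype Ω] (p : Ω → ℝ) (X : Ω → α) (Y : Ω → β) : Prop :=
  ∀ x y, pr p (fun ω => (X ω, Y ω)) (x, y) = pr p X x * pr p Y y

end

section helpers
variable {Ω : Type*} [Fintype Ω] (p : Ω → ℝ)

lemma pr_ext {α β : Type*} (X : Ω → α) (Y : Ω → β) (x : α) (y : β)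
    (h : ∀ ω, X ω = x ↔ Y ω = y) : pr p X x = pr p Y y := by
  unfold pr
  refine Finset.sum_congr rfl fun ω _ => ?_
  by_cases hx : X ω = x
  · rw [if_pos hx, if_pos ((h ω).mp hx)]
  · rw [if_neg hx, if_neg (fun hy => hx ((h ω).mpr hy))]

lemma pr_sum_one (hp : ∑ ω, p ω = 1) {α : Type*} [Fintype α] (X : Ω → α) :
    ∑ x : α, pr p X x = 1 := by
  unfold pr
  rw [Finset.sum_comm, ← hp]
  refine Finset.sum_congr rfl fun ω _ => ?_
  simp

lemma pr_marg {α β : Type*} [Fintype β] (X : Ω → α) (Z : Ω → β) (x : α) :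
    pr p X x = ∑ z : β, pr p (fun ω => (X ω, Z ω)) (x, z) := by
  unfold pr
  rw [Finset.sum_comm]
  refine Finset.sum_congr rfl fun ω _ => ?_
  by_cases hx : X ω = x
  · simp [Prod.ext_iff, hx]
  · simp [Prod.ext_iff, hx]

lemma pr_zero_of_not_mem {α : Type*} (X : Ω → α) (x : α)
    (hx : x ∉ Finset.univ.image X) : pr p X x = 0 := by
  refine Finset.sum_eq_zero fun ω _ => ?_
  rw [if_neg]
  exact fun h => hx (Finset.mem_image.mpr ⟨ω, Finset.mem_univ ω, h⟩)

lemma ent_eq_full {α : Type*} [Fintype α] (X : Ω → α) :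
    ent p X = -∑ x : α, pr p X x * Real.logb 2 (pr p X x) := by
  unfold ent
  congr 1
  refine Finset.sum_subset (Finset.subset_univ _) fun x _ hx => ?_
  rw [pr_zero_of_not_mem p X x hx]
  simp

lemma mul_logb_mul (a b : ℝ) :
    a * b * Real.logb 2 (a * b) = a * b * Real.logb 2 a + a * b * Real.logb 2 b := by
  rcases eq_or_ne a 0 with h | h
  · simp [h]
  rcases eq_or_ne b 0 with h' | h'
  · simp [h']
  rw [Real.logb_mul h h', mul_add]

lemma sum_logb_prod {ι κ : Type*} [Fintype ι] [Fintype κ] (f : ι → ℝ) (g : κ → ℝ)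
    (hf : ∑ i, f i = 1) (hg : ∑ j, g j = 1) :
    ∑ ij : ι × κ, (f ij.1 * g ij.2) * Real.logb 2 (f ij.1 * g ij.2)
      = (∑ i, f i * Real.logb 2 (f i)) + (∑ j, g j * Real.logb 2 (g j)) := by
  rw [Fintype.sum_prod_type]
  have key : ∀ (i : ι) (j : κ), f i * g j * Real.logb 2 (f i * g j)
      = f i * Real.logb 2 (f i) * g j + f i * (g j * Real.logb 2 (g j)) := by
    intro i j; rw [mul_logb_mul]; ring
  simp_rw [key, Finset.sum_add_distrib, ← Finset.mul_sum, hg, mul_one, ← Finset.sum_mul,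
    hf, one_mul]

end helpers

/-- Let `S₀, S₁` be i.i.d. `{0,1}`-valued random variables and `(X₁,X₂)` be independent of
`(S₀,S₁)` (with arbitrary joint law).  With `T = S₀` if `X₁ = X₂` and `T = S₁` otherwise,
`H(T | X₁,X₂) = H(S₀)` and `H(S₀,S₁ | X₁,X₂,T) = H(S₀)`. -/
theorem selected_state_conditional_entropies
    {Ω : Type*} [Fintype Ω]
    (p : Ω → ℝ) (hp : IsPMF p)
    (S₀ S₁ X₁ X₂ T : Ω → Bool)
    (hSindep : IndepRV p S₀ S₁)
    (hSident : ∀ b, pr p S₀ b = pr p S₁ b)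
    (hXS : IndepRV p (fun ω => (X₁ ω, X₂ ω)) (fun ω => (S₀ ω, S₁ ω)))
    (hT : ∀ ω, T ω = if X₁ ω = X₂ ω then S₀ ω else S₁ ω) :
    condEnt p T (fun ω => (X₁ ω, X₂ ω)) = ent p S₀ ∧
    condEnt p (fun ω => (S₀ ω, S₁ ω)) (fun ω => (X₁ ω, X₂ ω, T ω)) = ent p S₀ := by
  obtain ⟨hp0, hp1⟩ := hp
  set q : Bool → ℝ := pr p S₀ with hqdef
  set r : Bool × Bool → ℝ := pr p (fun ω => (X₁ ω, X₂ ω)) with hrdef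
  have hq1 : ∑ b : Bool, q b = 1 := pr_sum_one p hp1 S₀
  have hr1 : ∑ x : Bool × Bool, r x = 1 := pr_sum_one p hp1 _
  have joint4 : ∀ (x : Bool × Bool) (s₀ s₁ : Bool),
      pr p (fun ω => ((X₁ ω, X₂ ω), (S₀ ω, S₁ ω))) (x, (s₀, s₁)) = r x * (q s₀ * q s₁) := by
    intro x s₀ s₁
    rw [hXS x (s₀, s₁), hSindep s₀ s₁, ← hSident s₁]
  have XS₀ : ∀ (x : Bool × Bool) (s₀ : Bool),
      pr p (fun ω => ((X₁ ω, X₂ ω), S₀ ω)) (x, s₀) = r x * q s₀ := by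
    intro x s₀
    rw [pr_marg p (fun ω => ((X₁ ω, X₂ ω), S₀ ω)) S₁ (x, s₀)]
    have e : ∀ s₁ : Bool,
        pr p (fun ω => (((X₁ ω, X₂ ω), S₀ ω), S₁ ω)) ((x, s₀), s₁)
          = r x * q s₀ * q s₁ := by
      intro s₁
      rw [pr_ext p _ (fun ω => ((X₁ ω, X₂ ω), (S₀ ω, S₁ ω))) _ (x, (s₀, s₁))
        (by intro ω; simp only [Prod.ext_iff]; tauto), joint4 x s₀ s₁, mul_assoc]
    simp_rw [e, ← Finset.mul_sum, hq1, mul_one]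
  have XS₁ : ∀ (x : Bool × Bool) (s₁ : Bool),
      pr p (fun ω => ((X₁ ω, X₂ ω), S₁ ω)) (x, s₁) = r x * q s₁ := by
    intro x s₁
    rw [pr_marg p (fun ω => ((X₁ ω, X₂ ω), S₁ ω)) S₀ (x, s₁)]
    have e : ∀ s₀ : Bool,
        pr p (fun ω => (((X₁ ω, X₂ ω), S₁ ω), S₀ ω)) ((x, s₁), s₀)
          = r x * q s₁ * q s₀ := by
      intro s₀
      rw [pr_ext p _ (fun ω => ((X₁ ω, X₂ ω), (S₀ ω, S₁ ω))) _ (x, (s₀, s₁))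
        (by intro ω; simp only [Prod.ext_iff]; tauto), joint4 x s₀ s₁]
      ring
    simp_rw [e, ← Finset.mul_sum, hq1, mul_one]
  have prTX : ∀ v : Bool × Bool × Bool,
      pr p (fun ω => (T ω, X₁ ω, X₂ ω)) v = q v.1 * r v.2 := by
    rintro ⟨t, x₁, x₂⟩
    by_cases hx : x₁ = x₂
    · have key : ∀ ω, X₁ ω = x₁ → X₂ ω = x₂ → T ω = S₀ ω := by
        intro ω h1 h2
        rw [hT ω, if_pos (by rw [h1, h2]; exact hx)]
      rw [pr_ext p _ (fun ω => ((X₁ ω, X₂ ω), S₀ ω)) _ ((x₁, x₂), t) ?_, XS₀, mul_comm]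
      intro ω
      simp only [Prod.mk.injEq]
      constructor
      · rintro ⟨ht, h1, h2⟩
        exact ⟨⟨h1, h2⟩, by rw [← key ω h1 h2]; exact ht⟩
      · rintro ⟨⟨h1, h2⟩, hs⟩
        exact ⟨by rw [key ω h1 h2]; exact hs, h1, h2⟩
    · have key : ∀ ω, X₁ ω = x₁ → X₂ ω = x₂ → T ω = S₁ ω := by
        intro ω h1 h2
        rw [hT ω, if_neg (by rw [h1, h2]; exact hx)]
      rw [pr_ext p _ (fun ω => ((X₁ ω, X₂ ω), S₁ ω)) _ ((x₁, x₂), t) ?_, XS₁, mul_comm]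
      intro ω
      simp only [Prod.mk.injEq]
      constructor
      · rintro ⟨ht, h1, h2⟩
        exact ⟨⟨h1, h2⟩, by rw [← key ω h1 h2]; exact ht⟩
      · rintro ⟨⟨h1, h2⟩, hs⟩
        exact ⟨by rw [key ω h1 h2]; exact hs, h1, h2⟩
  have prXT : ∀ v : Bool × Bool × Bool,
      pr p (fun ω => (X₁ ω, X₂ ω, T ω)) v = r (v.1, v.2.1) * q v.2.2 := by
    rintro ⟨x₁, x₂, t⟩
    rw [pr_ext p _ (fun ω => (T ω, X₁ ω, X₂ ω)) _ (t, x₁, x₂)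
      (by intro ω; simp only [Prod.ext_iff]; tauto), prTX (t, x₁, x₂), mul_comm]
  have prBig : ∀ v : (Bool × Bool) × (Bool × Bool × Bool),
      pr p (fun ω => ((S₀ ω, S₁ ω), (X₁ ω, X₂ ω, T ω))) v
        = if v.2.2.2 = (if v.2.1 = v.2.2.1 then v.1.1 else v.1.2)
          then q v.1.1 * q v.1.2 * r (v.2.1, v.2.2.1) else 0 := by
    rintro ⟨⟨s₀, s₁⟩, ⟨x₁, x₂, t⟩⟩
    simp only
    by_cases ht : t = (if x₁ = x₂ then s₀ else s₁)
    · rw [if_pos ht, pr_ext p _ (fun ω => ((X₁ ω, X₂ ω), (S₀ ω, S₁ ω))) _ ((x₁, x₂), (s₀, s₁)) ?_,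
        joint4]
      · ring
      · intro ω
        simp only [Prod.mk.injEq]
        constructor
        · rintro ⟨⟨h0, h1⟩, hx1, hx2, _⟩
          exact ⟨⟨hx1, hx2⟩, h0, h1⟩
        · rintro ⟨⟨hx1, hx2⟩, h0, h1⟩
          refine ⟨⟨h0, h1⟩, hx1, hx2, ?_⟩
          rw [hT ω]
          simp only [hx1, hx2, h0, h1]
          exact ht.symm
    · rw [if_neg ht]
      refine Finset.sum_eq_zero fun ω _ => ?_
      rw [if_neg]
      rintro h
      simp only [Prod.mk.injEq] at h
      obtain ⟨⟨h0, h1⟩, hx1, hx2, htt⟩ := h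
      apply ht
      rw [← htt, hT ω]
      simp only [hx1, hx2, h0, h1]
  -- entropies
  have entS₀ : ent p S₀ = -∑ b : Bool, q b * Real.logb 2 (q b) := ent_eq_full p S₀
  have entX : ent p (fun ω => (X₁ ω, X₂ ω))
      = -∑ x : Bool × Bool, r x * Real.logb 2 (r x) := ent_eq_full p _
  set Lq := ∑ b : Bool, q b * Real.logb 2 (q b) with hLq
  set Lr := ∑ x : Bool × Bool, r x * Real.logb 2 (r x) with hLr
  have entTX : ent p (fun ω => (T ω, (X₁ ω, X₂ ω))) = -(Lq + Lr) := by
    rw [ent_eq_full]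
    congr 1
    calc ∑ v : Bool × Bool × Bool,
          pr p (fun ω => (T ω, X₁ ω, X₂ ω)) v
            * Real.logb 2 (pr p (fun ω => (T ω, X₁ ω, X₂ ω)) v)
        = ∑ v : Bool × (Bool × Bool), (q v.1 * r v.2) * Real.logb 2 (q v.1 * r v.2) :=
          Finset.sum_congr rfl fun v _ => by rw [prTX v]
      _ = Lq + Lr := sum_logb_prod q r hq1 hr1
  have entXT : ent p (fun ω => (X₁ ω, X₂ ω, T ω)) = -(Lr + Lq) := by
    rw [ent_eq_full]
    congr 1
    calc ∑ v : Bool × Bool × Bool,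
          pr p (fun ω => (X₁ ω, X₂ ω, T ω)) v
            * Real.logb 2 (pr p (fun ω => (X₁ ω, X₂ ω, T ω)) v)
        = ∑ v : Bool × Bool × Bool,
            (r (v.1, v.2.1) * q v.2.2) * Real.logb 2 (r (v.1, v.2.1) * q v.2.2) :=
          Finset.sum_congr rfl fun v _ => by rw [prXT v]
      _ = ∑ w : (Bool × Bool) × Bool, (r w.1 * q w.2) * Real.logb 2 (r w.1 * q w.2) :=
          Fintype.sum_equiv (Equiv.prodAssoc Bool Bool Bool).symm _ _
            (fun v => by simp [Equiv.prodAssoc])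
      _ = Lr + Lq := sum_logb_prod r q hr1 hq1
  have hqq1 : ∑ s : Bool × Bool, q s.1 * q s.2 = 1 := by
    rw [Fintype.sum_prod_type]
    simp_rw [← Finset.mul_sum, hq1, mul_one]
    exact hq1
  have entBig : ent p (fun ω => ((S₀ ω, S₁ ω), (X₁ ω, X₂ ω, T ω))) = -((Lq + Lq) + Lr) := by
    rw [ent_eq_full]
    congr 1
    let E : ((Bool × Bool) × (Bool × Bool × Bool)) ≃ (((Bool × Bool) × (Bool × Bool)) × Bool) :=
      { toFun := fun v => ((v.1, (v.2.1, v.2.2.1)), v.2.2.2)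
        invFun := fun w => (w.1.1, (w.1.2.1, w.1.2.2, w.2))
        left_inv := fun v => rfl
        right_inv := fun w => rfl }
    calc ∑ v : (Bool × Bool) × (Bool × Bool × Bool),
          pr p (fun ω => ((S₀ ω, S₁ ω), (X₁ ω, X₂ ω, T ω))) v
            * Real.logb 2 (pr p (fun ω => ((S₀ ω, S₁ ω), (X₁ ω, X₂ ω, T ω))) v)
        = ∑ w : ((Bool × Bool) × (Bool × Bool)) × Bool,
            (if w.2 = (if w.1.2.1 = w.1.2.2 then w.1.1.1 else w.1.1.2)
              then q w.1.1.1 * q w.1.1.2 * r w.1.2 else 0)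
            * Real.logb 2
              (if w.2 = (if w.1.2.1 = w.1.2.2 then w.1.1.1 else w.1.1.2)
                then q w.1.1.1 * q w.1.1.2 * r w.1.2 else 0) :=
          Fintype.sum_equiv E _ _ (fun v => by rw [prBig v]; rfl)
      _ = ∑ y : (Bool × Bool) × (Bool × Bool),
            (q y.1.1 * q y.1.2 * r y.2) * Real.logb 2 (q y.1.1 * q y.1.2 * r y.2) := by
          rw [Fintype.sum_prod_type]
          refine Finset.sum_congr rfl fun y _ => ?_
          have step : ∀ t : Bool,
              (if t = (if y.2.1 = y.2.2 then y.1.1 else y.1.2)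
                then q y.1.1 * q y.1.2 * r y.2 else 0)
              * Real.logb 2
                (if t = (if y.2.1 = y.2.2 then y.1.1 else y.1.2)
                  then q y.1.1 * q y.1.2 * r y.2 else 0)
              = if t = (if y.2.1 = y.2.2 then y.1.1 else y.1.2)
                  then (q y.1.1 * q y.1.2 * r y.2)
                    * Real.logb 2 (q y.1.1 * q y.1.2 * r y.2) else 0 := by
            intro t; split_ifs <;> simp
          simp_rw [step]
          rw [Finset.sum_ite_eq' Finset.univ]
          simp
      _ = (Lq + Lq) + Lr := by
          have h1 := sum_logb_prod (fun s : Bool × Bool => q s.1 * q s.2) r hqq1 hr1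
          have h2 := sum_logb_prod q q hq1 hq1
          rw [h1, h2]
  refine ⟨?_, ?_⟩
  · simp only [condEnt]
    rw [entTX, entX, entS₀]
    ring
  · simp only [condEnt]
    rw [entBig, entXT, entS₀]
    ring
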